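/- An observation function Obs over Σ is a product observation over a distribution Ω = {Σ_1,…,Σ_n} (i.e., there exists a product language over Ω agreeing with Obs) if and only if for every trace σ in the domain of Obs, Obs(σ) = + exactly when for all i the local observation Obs_{Σ_i}(proj(σ, Σ_i)) = +. -/

import Mathlib

open Classical in
/-- Projection of a trace onto a sub-alphabet. -/
noncomputable def proj {A : Type*} (s : Set A) : List A → List A
  | [] => []
  | a :: σ => if a ∈ s then a :: proj s σ else proj s σ

/-- A distribution of the alphabet `A`: a family of sub-alphabets covering `A`. -/
def AlphabetDistribution {A : Type*} (Ω : Set (Set A)) : Prop := ⋃₀ Ω = Set.univ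

/-- A language agrees with an observation function (`L ⊨ Obs`). -/
def Agrees {A : Type*} (L : Set (List A)) (Obs : List A → Option Bool) : Prop :=
  ∀ σ b, Obs σ = some b → (σ ∈ L ↔ b = true)

/-- `L` is a product language over the distribution `Ω`: it is the parallel
composition of a family of languages over the component alphabets. -/
def ProductLang {A : Type*} (Ω : Set (Set A)) (L : Set (List A)) : Prop :=
  ∃ Ls : Set A → Set (List A),
    (∀ s ∈ Ω, ∀ σ ∈ Ls s, ∀ a ∈ σ, a ∈ s) ∧
    L = {σ | ∀ s ∈ Ω, proj s σ ∈ Ls s}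

/-- `Ω ⊨ Obs`: some product language over `Ω` agrees with `Obs`. -/
def Models {A : Type*} (Ω : Set (Set A)) (Obs : List A → Option Bool) : Prop :=
  ∃ L, ProductLang Ω L ∧ Agrees L Obs

/-- A counter-example to `Ω ⊨ Obs`: a negative observation `σN` together with,
for each component alphabet, a positive observation with matching projection. -/
def IsCED {A : Type*} (Ω : Set (Set A)) (Obs : List A → Option Bool)
    (σN : List A) (P : Set A → List A) : Prop :=
  Obs σN = some false ∧
  ∀ s ∈ Ω, Obs (P s) = some true ∧ proj s σN = proj s (P s)

/-- The connectivity preorder: `Ω` is less connecting than `Ω'`. -/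
def lessConn {A : Type*} (Ω Ω' : Set (Set A)) : Prop :=
  ∀ s ∈ Ω, ∃ t ∈ Ω', s ⊆ t

/-- `Obs` is a product observation over `Ω` iff every observed trace is positive
exactly when all of its local observations are positive. -/
lemma mem_proj_aux {A : Type*} (s : Set A) (σ : List A) : ∀ a ∈ proj s σ, a ∈ s := by
  induction σ with
  | nil => simp [proj]
  | cons h t ih =>
    intro a ha
    simp only [proj] at ha
    split at ha
    · rcases List.mem_cons.mp ha with h1 | h1
      · subst h1; assumption
      · exact ih a h1
    · exact ih a ha

theorem models_iff_local_obs {A : Type*} (Ω : Set (Set A)) (hΩ : AlphabetDistribution Ω)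
    (Obs : List A → Option Bool) (hfin : {σ | Obs σ ≠ none}.Finite) :
    Models Ω Obs ↔
      ∀ σ b, Obs σ = some b →
        (b = true ↔ ∀ s ∈ Ω, ∃ τ, Obs τ = some true ∧ proj s τ = proj s σ) := by
  constructor
  · rintro ⟨L, ⟨Ls, hLs, rfl⟩, hAg⟩ σ b hσ
    constructor
    · intro hb s hs
      exact ⟨σ, hb ▸ hσ, rfl⟩
    · intro h
      have hσL : σ ∈ {σ | ∀ s ∈ Ω, proj s σ ∈ Ls s} := by
        intro s hs
        obtain ⟨τ, hτ, hp⟩ := h s hs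
        have hτL : ∀ s ∈ Ω, proj s τ ∈ Ls s := (hAg τ true hτ).mpr rfl
        exact hp ▸ hτL s hs
      exact (hAg σ b hσ).mp hσL
  · intro h
    refine ⟨{σ | ∀ s ∈ Ω, ∃ τ, Obs τ = some true ∧ proj s τ = proj s σ},
      ⟨fun s => {σ' | (∀ a ∈ σ', a ∈ s) ∧ ∃ τ, Obs τ = some true ∧ proj s τ = σ'},
        ?_, ?_⟩, ?_⟩
    · intro s hs σ hσ a ha
      exact hσ.1 a ha
    · ext σ
      simp only [Set.mem_setOf_eq]
      constructor
      · intro hσ s hs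
        exact ⟨mem_proj_aux s σ, hσ s hs⟩
      · intro hσ s hs
        exact (hσ s hs).2
    · intro σ b hσ
      exact (h σ b hσ).symm
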